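/- Let k be a field of characteristic 3. Then the group algebra k[S₃] of the symmetric group S₃ on three letters has exactly two prime two-sided ideals. -/

import Mathlib

/-- A subset `I` of a ring `B` is a two-sided ideal: it contains `0`, is closed under
addition, and is closed under multiplication by arbitrary ring elements on both sides. -/
def IsTwoSidedIdealSet {B : Type*} [Ring B] (I : Set B) : Prop :=
  (0 : B) ∈ I ∧ (∀ a ∈ I, ∀ b ∈ I, a + b ∈ I) ∧
    (∀ (x : B), ∀ a ∈ I, x * a ∈ I) ∧ (∀ (x : B), ∀ a ∈ I, a * x ∈ I)

/-- A subset `I` of a ring `B` is a prime two-sided ideal: it is a proper two-sided ideal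
such that whenever `a * x * b ∈ I` for all `x`, either `a ∈ I` or `b ∈ I`. -/
def IsPrimeTwoSidedIdeal {B : Type*} [Ring B] (I : Set B) : Prop :=
  IsTwoSidedIdealSet I ∧ I ≠ Set.univ ∧
    ∀ a b : B, (∀ x : B, a * x * b ∈ I) → a ∈ I ∨ b ∈ I

open MonoidAlgebra
set_option linter.unusedSectionVars false
set_option linter.unreachableTactic false
set_option linter.unusedTactic false
set_option maxHeartbeats 1000000

namespace S3Aux

abbrev G3 := Equiv.Perm (Fin 3)
def cg : G3 := finRotate 3
def tg : G3 := Equiv.swap 0 1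
lemma enumG : ∀ g : G3, g = 1 ∨ g = cg ∨ g = cg*cg ∨ g = tg ∨ g = tg*cg ∨ g = tg*cg*cg := by
  decide
lemma hc3 : cg * cg * cg = 1 := by decide
lemma htc3 : tg * cg * cg * cg = tg := by decide
lemma sgn1 : ((Equiv.Perm.sign (1:G3) : ℤ) : ℚ) = 1 := by norm_num
lemma sgn_cg (k : Type*) [Field k] : ((Equiv.Perm.sign cg : ℤ) : k) = 1 := by
  have : Equiv.Perm.sign cg = 1 := by decide
  rw [this]; norm_num
lemma sgn_cg2 (k : Type*) [Field k] : ((Equiv.Perm.sign (cg*cg) : ℤ) : k) = 1 := by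
  have : Equiv.Perm.sign (cg*cg) = 1 := by decide
  rw [this]; norm_num
lemma sgn_tg (k : Type*) [Field k] : ((Equiv.Perm.sign tg : ℤ) : k) = -1 := by
  have : Equiv.Perm.sign tg = -1 := by decide
  rw [this]; norm_num
lemma sgn_tgc (k : Type*) [Field k] : ((Equiv.Perm.sign (tg*cg) : ℤ) : k) = -1 := by
  have : Equiv.Perm.sign (tg*cg) = -1 := by decide
  rw [this]; norm_num
lemma sgn_tgc2 (k : Type*) [Field k] : ((Equiv.Perm.sign (tg*cg*cg) : ℤ) : k) = -1 := by
  have : Equiv.Perm.sign (tg*cg*cg) = -1 := by decide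
  rw [this]; norm_num

section
variable (k : Type*) [Field k] [CharP k 3]

lemma b_add (x y : MonoidAlgebra k G3) (g : G3) : (x + y).coeff g = x.coeff g + y.coeff g := rfl
lemma b_sub (x y : MonoidAlgebra k G3) (g : G3) : (x - y).coeff g = x.coeff g - y.coeff g := rfl
lemma b_neg (x : MonoidAlgebra k G3) (g : G3) : (-x).coeff g = -(x.coeff g) := rfl
lemma b_zero (g : G3) : (0 : MonoidAlgebra k G3).coeff g = 0 := rfl

lemma decomp (x : MonoidAlgebra k G3) :
    x = single 1 (x.coeff 1) + single cg (x.coeff cg) + single (cg*cg) (x.coeff (cg*cg))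
      + single tg (x.coeff tg) + single (tg*cg) (x.coeff (tg*cg)) + single (tg*cg*cg) (x.coeff (tg*cg*cg)) := by
  ext g
  rcases enumG g with h|h|h|h|h|h <;> subst h <;>
    simp (config := { decide := true }) [b_add, MonoidAlgebra.single_apply]

noncomputable def phiP : MonoidAlgebra k G3 →ₐ[k] k := MonoidAlgebra.lift k k G3 1
noncomputable def chi3 : G3 →* k :=
  (Int.castRingHom k).toMonoidHom.comp ((Units.coeHom ℤ).comp Equiv.Perm.sign)
noncomputable def phiM : MonoidAlgebra k G3 →ₐ[k] k := MonoidAlgebra.lift k k G3 (chi3 k)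

@[simp] lemma phiP_single (g : G3) (r : k) : phiP k (single g r) = r := by simp [phiP]
@[simp] lemma phiM_single (g : G3) (r : k) :
    phiM k (single g r) = r * ((Equiv.Perm.sign g : ℤ) : k) := by
  simp [phiM, chi3, smul_eq_mul]

lemma char3 : (3 : k) = 0 := by exact_mod_cast CharP.cast_eq_zero k 3
lemma two_ne : (2 : k) ≠ 0 := by
  intro h
  have := CharP.cast_eq_zero_iff k 3 2
  simp at this
  exact this (by exact_mod_cast h)

/-- the element δ = c - 1 -/
noncomputable def dl : MonoidAlgebra k G3 := single cg 1 - 1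

lemma phiP_dl : phiP k (dl k) = 0 := by
  simp [dl, map_sub]
lemma phiM_dl : phiM k (dl k) = 0 := by
  simp [dl, map_sub, sgn_cg]

lemma dl_cube : dl k * (dl k * dl k) = 0 := by
  have h3 := char3 k
  simp only [dl, sub_mul, mul_sub, one_mul, mul_one, single_mul_single]
  ext g
  rcases enumG g with h|h|h|h|h|h <;> subst h <;>
    simp (config := { decide := true }) [b_add, b_sub, b_neg, b_zero, MonoidAlgebra.one_def,
      MonoidAlgebra.single_apply, Finsupp.single_apply, hc3] <;>
    first
      | ring1
      | linear_combination h3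
      | linear_combination -h3
      | linear_combination 2*h3
      | linear_combination -2*h3

/-- The key factorization lemma: I ⊆ R·δ -/
lemma factor (x : MonoidAlgebra k G3) (h1 : phiP k x = 0) (h2 : phiM k x = 0) :
    ∃ u, x = u * dl k := by
  have hd := decomp k x
  have hP : x.coeff 1 + x.coeff cg + x.coeff (cg*cg) + x.coeff tg + x.coeff (tg*cg) + x.coeff (tg*cg*cg) = 0 := by
    have := congrArg (phiP k) hd
    rw [h1] at this
    simp only [map_add, phiP_single] at this
    exact this.symm
  have hM : x.coeff 1 + x.coeff cg + x.coeff (cg*cg) - x.coeff tg - x.coeff (tg*cg) - x.coeff (tg*cg*cg) = 0 := by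
    have := congrArg (phiM k) hd
    rw [h2] at this
    simp only [map_add, phiM_single, sgn_cg, sgn_cg2, sgn_tg, sgn_tgc, sgn_tgc2,
      Equiv.Perm.sign_one, Units.val_one, Int.cast_one, mul_one, mul_neg] at this
    linear_combination -this
  have hE : x.coeff (cg*cg) = - x.coeff 1 - x.coeff cg := by
    have h2' : (2:k) * (x.coeff 1 + x.coeff cg + x.coeff (cg*cg)) = 0 := by linear_combination hP + hM
    rcases mul_eq_zero.mp h2' with h | h
    · exact absurd h (two_ne k)
    · linear_combination h
  have hO : x.coeff (tg*cg*cg) = - x.coeff tg - x.coeff (tg*cg) := by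
    have h2' : (2:k) * (x.coeff tg + x.coeff (tg*cg) + x.coeff (tg*cg*cg)) = 0 := by linear_combination hP - hM
    rcases mul_eq_zero.mp h2' with h | h
    · exact absurd h (two_ne k)
    · linear_combination h
  refine ⟨single cg (-(x.coeff cg)) + single (cg*cg) (x.coeff 1)
    + single (tg*cg) (-(x.coeff (tg*cg))) + single (tg*cg*cg) (x.coeff tg), ?_⟩
  rw [hd]
  simp only [dl, mul_sub, add_mul, mul_one, single_mul_single, one_mul, hc3, htc3]
  ext g
  rcases enumG g with h|h|h|h|h|h <;> subst h <;>
    simp (config := { decide := true }) [b_add, b_sub, b_neg, b_zero,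
      MonoidAlgebra.single_apply, hE, hO] <;>
    ring

/-- kernels of algebra maps to the field are prime two-sided ideals -/
lemma ker_prime (φ : MonoidAlgebra k G3 →ₐ[k] k) :
    IsPrimeTwoSidedIdeal {x : MonoidAlgebra k G3 | φ x = 0} := by
  refine ⟨⟨by simp, ?_, ?_, ?_⟩, ?_, ?_⟩
  · intro a ha b hb; simp only [Set.mem_setOf_eq] at *; rw [map_add, ha, hb, add_zero]
  · intro x a ha; simp only [Set.mem_setOf_eq] at *; rw [map_mul, ha, mul_zero]
  · intro x a ha; simp only [Set.mem_setOf_eq] at *; rw [map_mul, ha, zero_mul]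
  · intro h
    have h1 : (1 : MonoidAlgebra k G3) ∈ Set.univ := Set.mem_univ _
    rw [← h] at h1
    simp only [Set.mem_setOf_eq, map_one] at h1
    exact one_ne_zero h1
  · intro a b hab
    have := hab 1
    simp only [Set.mem_setOf_eq, map_mul, map_one, mul_one] at this
    rcases mul_eq_zero.mp this with h | h
    · exact Or.inl h
    · exact Or.inr h

/-- every prime contains the radical I = ker φ₊ ∩ ker φ₋ -/
lemma rad_sub_prime (P : Set (MonoidAlgebra k G3)) (hP : IsPrimeTwoSidedIdeal P)
    (x : MonoidAlgebra k G3) (h1 : phiP k x = 0) (h2 : phiM k x = 0) : x ∈ P := by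
  obtain ⟨⟨hz, hadd, hl, hr⟩, hne, hpr⟩ := hP
  -- Step A : for a b in I, a*y*b ∈ P
  have stepA : ∀ a b y : MonoidAlgebra k G3, phiP k a = 0 → phiM k a = 0 →
      phiP k b = 0 → phiM k b = 0 → a * y * b ∈ P := by
    intro a b y haP haM hbP hbM
    obtain ⟨b₁, hb₁⟩ := factor k b hbP hbM
    obtain ⟨w₁, hw₁⟩ := factor k (a * y * b₁)
      (by rw [map_mul, map_mul, haP, zero_mul, zero_mul])
      (by rw [map_mul, map_mul, haM, zero_mul, zero_mul])
    have hu : a * y * b = w₁ * dl k * dl k := by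
      rw [hb₁, ← mul_assoc, hw₁]
    have key : ∀ x', (a*y*b) * x' * (a*y*b) ∈ P := by
      intro x'
      obtain ⟨v, hv⟩ := factor k (dl k * dl k * x' * w₁)
        (by rw [map_mul, map_mul, map_mul, phiP_dl, zero_mul, zero_mul, zero_mul])
        (by rw [map_mul, map_mul, map_mul, phiM_dl, zero_mul, zero_mul, zero_mul])
      have : (a*y*b) * x' * (a*y*b) = 0 := by
        rw [hu]
        calc w₁ * dl k * dl k * x' * (w₁ * dl k * dl k)
            = w₁ * (dl k * dl k * x' * w₁) * (dl k * dl k) := by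
              simp only [mul_assoc]
          _ = w₁ * (v * dl k) * (dl k * dl k) := by rw [hv]
          _ = (w₁ * v) * (dl k * (dl k * dl k)) := by simp only [mul_assoc]
          _ = 0 := by rw [dl_cube, mul_zero]
      rw [this]; exact hz
    rcases hpr (a*y*b) (a*y*b) key with h | h
    · exact h
    · exact h
  -- Step B
  rcases hpr x x (fun y => stepA x x y h1 h2 h1 h2) with h | h
  · exact h
  · exact h


lemma phi_algebraMap (φ : MonoidAlgebra k G3 →ₐ[k] k) (c : k) :
    φ (algebraMap k (MonoidAlgebra k G3) c) = c := by
  rw [AlgHom.commutes]; simp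

/-- a proper two-sided ideal that contains a kernel of φ : R →ₐ k equals it -/
lemma ker_max (P : Set (MonoidAlgebra k G3)) (hP : IsPrimeTwoSidedIdeal P)
    (φ : MonoidAlgebra k G3 →ₐ[k] k)
    (hsub : {x : MonoidAlgebra k G3 | φ x = 0} ⊆ P) :
    P = {x : MonoidAlgebra k G3 | φ x = 0} := by
  obtain ⟨⟨hz, hadd, hl, hr⟩, hne, hpr⟩ := hP
  refine (Set.Subset.antisymm ?_ hsub)
  intro y hy
  by_contra hne0
  simp only [Set.mem_setOf_eq] at hne0
  set z := algebraMap k (MonoidAlgebra k G3) (φ y)⁻¹ * y with hzdef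
  have hzP : z ∈ P := hl _ y hy
  have hz1 : φ z = 1 := by
    rw [hzdef, map_mul, phi_algebraMap, inv_mul_cancel₀ hne0]
  have hz1' : z - 1 ∈ P := hsub (by simp [Set.mem_setOf_eq, map_sub, hz1])
  have h1 : (1 : MonoidAlgebra k G3) ∈ P := by
    have := hadd z hzP _ (hr (-1) _ hz1')
    have heq : z + (z - 1) * (-1) = 1 := by noncomm_ring
    rwa [heq] at this
  apply hne
  apply Set.eq_univ_iff_forall.mpr
  intro r
  have := hl r 1 h1
  rwa [mul_one] at this

lemma classify (P : Set (MonoidAlgebra k G3)) (hP : IsPrimeTwoSidedIdeal P) :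
    P = {x : MonoidAlgebra k G3 | phiP k x = 0} ∨
      P = {x : MonoidAlgebra k G3 | phiM k x = 0} := by
  have h3 := char3 k
  have h41 : (4 : k) = 1 := by linear_combination h3
  set fp : MonoidAlgebra k G3 := single 1 (2:k) + single tg 2 with hfp
  set fm : MonoidAlgebra k G3 := single 1 (2:k) - single tg 2 with hfm
  have hfpP : phiP k fp = 1 := by
    rw [hfp, map_add, phiP_single, phiP_single]; linear_combination h3
  have hsgn1 : ((Equiv.Perm.sign (1:G3) : ℤ) : k) = 1 := by simp
  have hfpM : phiM k fp = 0 := by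
    rw [hfp, map_add, phiM_single, phiM_single, sgn_tg k, hsgn1]; ring
  have hfmP : phiP k fm = 0 := by
    rw [hfm, map_sub, phiP_single, phiP_single]; ring
  have hfmM : phiM k fm = 1 := by
    rw [hfm, map_sub, phiM_single, phiM_single, sgn_tg k, hsgn1]
    linear_combination h3
  obtain ⟨⟨hz, hadd, hl, hr⟩, hne, hpr⟩ := hP
  have hkey : fp ∈ P ∨ fm ∈ P := by
    apply hpr
    intro x
    apply rad_sub_prime k P ⟨⟨hz, hadd, hl, hr⟩, hne, hpr⟩
    · rw [map_mul, map_mul, hfmP, mul_zero]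
    · rw [map_mul, map_mul, hfpM, zero_mul, zero_mul]
  rcases hkey with hf | hf
  · -- fp ∈ P, phiM fp = 0, P = ker phiM
    right
    apply ker_max k P ⟨⟨hz, hadd, hl, hr⟩, hne, hpr⟩
    intro x hx
    simp only [Set.mem_setOf_eq] at hx
    have hw : x - phiP k x • fp ∈ P := by
      apply rad_sub_prime k P ⟨⟨hz, hadd, hl, hr⟩, hne, hpr⟩
      · rw [map_sub, map_smul, hfpP, smul_eq_mul, mul_one, sub_self]
      · rw [map_sub, map_smul, hfpM, smul_eq_mul, mul_zero, sub_zero, hx]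
    have hs : phiP k x • fp ∈ P := by
      rw [Algebra.smul_def]
      exact hl _ fp hf
    have := hadd _ hw _ hs
    rwa [sub_add_cancel] at this
  · -- fm ∈ P, P = ker phiP
    left
    apply ker_max k P ⟨⟨hz, hadd, hl, hr⟩, hne, hpr⟩
    intro x hx
    simp only [Set.mem_setOf_eq] at hx
    have hw : x - phiM k x • fm ∈ P := by
      apply rad_sub_prime k P ⟨⟨hz, hadd, hl, hr⟩, hne, hpr⟩
      · rw [map_sub, map_smul, hfmP, smul_eq_mul, mul_zero, sub_zero, hx]
      · rw [map_sub, map_smul, hfmM, smul_eq_mul, mul_one, sub_self]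
    have hs : phiM k x • fm ∈ P := by
      rw [Algebra.smul_def]
      exact hl _ fm hf
    have := hadd _ hw _ hs
    rwa [sub_add_cancel] at this


end
end S3Aux

theorem two_primes_of_groupAlgebra_S3 (k : Type*) [Field k] [CharP k 3] :
    {P : Set (MonoidAlgebra k (Equiv.Perm (Fin 3))) | IsPrimeTwoSidedIdeal P}.encard
      = 2 := by
  open S3Aux in
  have hset : {P : Set (MonoidAlgebra k (Equiv.Perm (Fin 3))) | IsPrimeTwoSidedIdeal P}
      = {{x : MonoidAlgebra k G3 | phiP k x = 0}, {x : MonoidAlgebra k G3 | phiM k x = 0}} := by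
    ext P
    simp only [Set.mem_setOf_eq, Set.mem_insert_iff, Set.mem_singleton_iff]
    constructor
    · intro h
      exact classify k P h
    · rintro (rfl | rfl) <;> exact ker_prime k _
  rw [hset]
  apply Set.encard_pair
  intro hcontra
  have hx0 : (single (tg) (1:k) - 1 : MonoidAlgebra k G3) ∈
      {x : MonoidAlgebra k G3 | phiP k x = 0} := by
    simp only [Set.mem_setOf_eq, map_sub, map_one, phiP_single, sub_self]
  rw [hcontra] at hx0
  simp only [Set.mem_setOf_eq, map_sub, map_one, phiM_single, sgn_tg, one_mul] at hx0
  have : (-2 : k) = 0 := by linear_combination hx0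
  have h1 : (1:k) = 0 := by linear_combination this + char3 k
  exact one_ne_zero h1
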